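/- For any k ≤ k' and any function f, if the loss function l(x,y) is jointly convex in (x,y), then the expected k-risk dominates the expected k'-risk: E over i.i.d. samples S of size k of l(mean of f(x_i) over S, mean of y_i over S) is at least the corresponding expectation for batches of size k'. -/

import Mathlib

open MeasureTheory

section Aux

variable {X : Type*} [MeasurableSpace X]

/-- The "delete coordinate `j`" map is measure preserving for i.i.d. product measures. -/
lemma measurePreserving_succAbove_comp
    (D : Measure (X × ℝ)) [IsProbabilityMeasure D] {m : ℕ} (j : Fin (m + 1)) :
    MeasurePreserving (fun z : Fin (m + 1) → X × ℝ => fun i : Fin m => z (j.succAbove i))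
      (Measure.pi fun _ : Fin (m + 1) => D) (Measure.pi fun _ : Fin m => D) := by
  have h1 := measurePreserving_piFinSuccAbove (fun _ : Fin (m + 1) => D) j
  have h2 : MeasurePreserving (Prod.snd)
      (D.prod (Measure.pi fun _ : Fin m => D)) (Measure.pi fun _ : Fin m => D) := by
    refine ⟨measurable_snd, ?_⟩
    simp [Measure.map_snd_prod]
  exact h2.comp h1

lemma sum_succAbove_sum {m : ℕ} (a : Fin (m + 1) → ℝ) :
    ∑ j : Fin (m + 1), ∑ i : Fin m, a (j.succAbove i) = m * ∑ j, a j := by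
  have h : ∀ j : Fin (m + 1), ∑ i : Fin m, a (j.succAbove i) = (∑ j, a j) - a j := by
    intro j
    have := Fin.sum_univ_succAbove a j
    linarith
  rw [Finset.sum_congr rfl fun j _ => h j]
  rw [Finset.sum_sub_distrib, Finset.sum_const, Finset.card_univ, Fintype.card_fin]
  ring

end Aux

/-- For a jointly convex loss `l`, the expected batched risk is
monotone non-increasing in the batch size: `r_{k'}(f,D) ≤ r_k(f,D)` for `k ≤ k'`. -/
theorem krisk_antitone_of_convex
    {X : Type*} [MeasurableSpace X]
    (D : Measure (X × ℝ)) [IsProbabilityMeasure D]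
    (f : X → ℝ) (l : ℝ × ℝ → ℝ)
    (hl : ConvexOn ℝ Set.univ l)
    (k k' : ℕ) (hk : 0 < k) (hkk' : k ≤ k')
    (hint : ∀ m : ℕ, 0 < m →
      Integrable
        (fun z : Fin m → X × ℝ =>
          l ((∑ i, f (z i).1) / m, (∑ i, (z i).2) / m))
        (Measure.pi fun _ : Fin m => D)) :
    (∫ z : Fin k' → X × ℝ,
        l ((∑ i, f (z i).1) / k', (∑ i, (z i).2) / k')
        ∂(Measure.pi fun _ : Fin k' => D)) ≤
    (∫ z : Fin k → X × ℝ,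
        l ((∑ i, f (z i).1) / k, (∑ i, (z i).2) / k)
        ∂(Measure.pi fun _ : Fin k => D)) := by
  -- Single-step lemma: r_{m+1} ≤ r_m for m ≥ 1.
  have step : ∀ m : ℕ, 0 < m →
      (∫ z : Fin (m + 1) → X × ℝ,
          l ((∑ i, f (z i).1) / (m + 1 : ℕ), (∑ i, (z i).2) / (m + 1 : ℕ))
          ∂(Measure.pi fun _ : Fin (m + 1) => D)) ≤
      (∫ z : Fin m → X × ℝ,
          l ((∑ i, f (z i).1) / m, (∑ i, (z i).2) / m)
          ∂(Measure.pi fun _ : Fin m => D)) := by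
    intro m hm
    set F : (Fin m → X × ℝ) → ℝ :=
      fun z => l ((∑ i, f (z i).1) / m, (∑ i, (z i).2) / m) with hF
    set T : Fin (m + 1) → (Fin (m + 1) → X × ℝ) → (Fin m → X × ℝ) :=
      fun j z i => z (j.succAbove i) with hT
    have hmp : ∀ j : Fin (m + 1), MeasurePreserving (T j)
        (Measure.pi fun _ : Fin (m + 1) => D) (Measure.pi fun _ : Fin m => D) :=
      fun j => measurePreserving_succAbove_comp D j
    have hFint : Integrable F (Measure.pi fun _ : Fin m => D) := hint m hm
    have hcompint : ∀ j : Fin (m + 1),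
        Integrable (fun z => F (T j z)) (Measure.pi fun _ : Fin (m + 1) => D) :=
      fun j => ((hmp j).integrable_comp hFint.aestronglyMeasurable).2 hFint
    -- pointwise Jensen inequality
    have hpt : ∀ z : Fin (m + 1) → X × ℝ,
        l ((∑ i, f (z i).1) / (m + 1 : ℕ), (∑ i, (z i).2) / (m + 1 : ℕ)) ≤
        ∑ j : Fin (m + 1), (1 / (m + 1 : ℝ)) * F (T j z) := by
      intro z
      have key : ((∑ i, f (z i).1) / ((m : ℝ) + 1), (∑ i, (z i).2) / ((m : ℝ) + 1)) =
          ∑ j : Fin (m + 1), (1 / ((m : ℝ) + 1)) •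
            (((∑ i : Fin m, f (z (j.succAbove i)).1) / m,
              (∑ i : Fin m, (z (j.succAbove i)).2) / m) : ℝ × ℝ) := by
        have hm' : (m : ℝ) ≠ 0 := Nat.cast_ne_zero.2 hm.ne'
        have h1 := sum_succAbove_sum (fun i => f (z i).1)
        have h2 := sum_succAbove_sum (fun i => (z i).2)
        ext
        · rw [Prod.fst_sum]
          simp only [Prod.smul_mk, smul_eq_mul]
          rw [← Finset.mul_sum, ← Finset.sum_div, h1]
          field_simp
        · rw [Prod.snd_sum]
          simp only [Prod.smul_mk, smul_eq_mul]
          rw [← Finset.mul_sum, ← Finset.sum_div, h2]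
          field_simp
      have := hl.map_sum_le (t := Finset.univ) (w := fun _ : Fin (m + 1) => 1 / ((m : ℝ) + 1))
        (p := fun j : Fin (m + 1) =>
          (((∑ i : Fin m, f (z (j.succAbove i)).1) / m,
            (∑ i : Fin m, (z (j.succAbove i)).2) / m) : ℝ × ℝ))
        (fun j _ => by positivity)
        (by simp [Finset.sum_const, Finset.card_univ]; field_simp)
        (fun j _ => Set.mem_univ _)
      push_cast
      calc l ((∑ i, f (z i).1) / ((m : ℝ) + 1), (∑ i, (z i).2) / ((m : ℝ) + 1))
          = l (∑ j : Fin (m + 1), (1 / ((m : ℝ) + 1)) •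
            (((∑ i : Fin m, f (z (j.succAbove i)).1) / m,
              (∑ i : Fin m, (z (j.succAbove i)).2) / m) : ℝ × ℝ)) := by rw [key]
        _ ≤ ∑ j : Fin (m + 1), (1 / ((m : ℝ) + 1)) *
            l (((∑ i : Fin m, f (z (j.succAbove i)).1) / m,
              (∑ i : Fin m, (z (j.succAbove i)).2) / m) : ℝ × ℝ) := this
        _ = ∑ j : Fin (m + 1), (1 / ((m : ℝ) + 1)) * F (T j z) := rfl
    -- integrate
    have hintLHS : Integrable
        (fun z : Fin (m + 1) → X × ℝ =>
          l ((∑ i, f (z i).1) / (m + 1 : ℕ), (∑ i, (z i).2) / (m + 1 : ℕ)))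
        (Measure.pi fun _ : Fin (m + 1) => D) := hint (m + 1) (Nat.succ_pos m)
    have hintRHS : Integrable
        (fun z : Fin (m + 1) → X × ℝ => ∑ j : Fin (m + 1), (1 / ((m : ℝ) + 1)) * F (T j z))
        (Measure.pi fun _ : Fin (m + 1) => D) := by
      apply integrable_finset_sum
      intro j _
      exact ((hcompint j).const_mul _)
    calc (∫ z : Fin (m + 1) → X × ℝ,
            l ((∑ i, f (z i).1) / (m + 1 : ℕ), (∑ i, (z i).2) / (m + 1 : ℕ))
            ∂(Measure.pi fun _ : Fin (m + 1) => D))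
        ≤ ∫ z : Fin (m + 1) → X × ℝ, ∑ j : Fin (m + 1), (1 / ((m : ℝ) + 1)) * F (T j z)
            ∂(Measure.pi fun _ : Fin (m + 1) => D) :=
          integral_mono hintLHS hintRHS hpt
      _ = ∑ j : Fin (m + 1), (1 / ((m : ℝ) + 1)) *
            ∫ z : Fin (m + 1) → X × ℝ, F (T j z) ∂(Measure.pi fun _ : Fin (m + 1) => D) := by
          rw [integral_finset_sum _ (fun j _ => (hcompint j).const_mul _)]
          exact Finset.sum_congr rfl fun j _ => integral_const_mul _ _
      _ = ∑ j : Fin (m + 1), (1 / ((m : ℝ) + 1)) *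
            ∫ z : Fin m → X × ℝ, F z ∂(Measure.pi fun _ : Fin m => D) := by
          refine Finset.sum_congr rfl fun j _ => ?_
          congr 1
          rw [← (hmp j).map_eq, integral_map (hmp j).measurable.aemeasurable]
          rw [(hmp j).map_eq]
          exact hFint.aestronglyMeasurable
      _ = ∫ z : Fin m → X × ℝ, F z ∂(Measure.pi fun _ : Fin m => D) := by
          rw [← Finset.sum_mul, Finset.sum_const, Finset.card_univ, Fintype.card_fin]
          have : ((m : ℝ) + 1) ≠ 0 := by positivity
          rw [nsmul_eq_mul, Nat.cast_succ]
          field_simp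
  -- induction from k to k'
  induction k' with
  | zero => omega
  | succ n ih =>
    rcases Nat.lt_or_ge k (n + 1) with h | h
    · have hkn : k ≤ n := by omega
      have hn : 0 < n := lt_of_lt_of_le hk hkn
      exact le_trans (step n hn) (ih hkn)
    · have : k = n + 1 := by omega
      subst this
      exact le_refl _
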